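/- Let n ≥ 3 be an integer and let Gₙ be the group presented by generators a, b, s, t and relators ab = ba, s aⁿ s⁻¹ = ab, t bⁿ t⁻¹ = ab. Then Gₙ is not free-by-ℤ: there is no normal subgroup N of Gₙ isomorphic to a free group of finite rank with Gₙ/N isomorphic to ℤ. -/

import Mathlib

/-- Generators `a, b, s, t` of Wise's non-simple-curve groups. -/
def a17 : FreeGroup (Fin 4) := FreeGroup.of 0
def b17 : FreeGroup (Fin 4) := FreeGroup.of 1
def s17 : FreeGroup (Fin 4) := FreeGroup.of 2
def t17 : FreeGroup (Fin 4) := FreeGroup.of 3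

/-- Relators `ab = ba`, `s aⁿ s⁻¹ = ab`, `t bⁿ t⁻¹ = ab`. -/
def rels17 (n : ℕ) : Set (FreeGroup (Fin 4)) :=
  {a17 * b17 * (b17 * a17)⁻¹, s17 * a17 ^ n * s17⁻¹ * (a17 * b17)⁻¹,
    t17 * b17 ^ n * t17⁻¹ * (a17 * b17)⁻¹}

section WiseAux

/-- Translations of `ℝ` as a homomorphism into the permutation group. -/
def addLeftHom : Multiplicative ℝ →* Equiv.Perm ℝ where
  toFun x := Equiv.addLeft x.toAdd
  map_one' := by ext z; simp
  map_mul' x y := by ext z; simp [add_assoc]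

lemma addLeftHom_apply (x : ℝ) (z : ℝ) : addLeftHom (Multiplicative.ofAdd x) z = x + z := rfl

lemma addLeftHom_inj {x y : ℝ}
    (h : addLeftHom (Multiplicative.ofAdd x) = addLeftHom (Multiplicative.ofAdd y)) : x = y := by
  have := congrArg (fun p : Equiv.Perm ℝ => p 0) h
  simpa [addLeftHom_apply] using this

lemma addLeftHom_zpow (x : ℝ) (k : ℤ) :
    addLeftHom (Multiplicative.ofAdd x) ^ k = addLeftHom (Multiplicative.ofAdd (k * x)) := by
  rw [← map_zpow]
  congr 1
  rw [← ofAdd_zsmul, zsmul_eq_mul]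

/-- In a free group, two distinct generators do not commute. -/
lemma freeGroup_of_comm_eq {β : Type*} (u v : β)
    (h : FreeGroup.of u * FreeGroup.of v = FreeGroup.of v * FreeGroup.of u) : u = v := by
  by_contra hne
  classical
  set f : β → Equiv.Perm (Fin 3) := fun z => if z = u then Equiv.swap 0 1 else Equiv.swap 1 2 with hf
  have h2 := congrArg (FreeGroup.lift f) h
  rw [map_mul, map_mul, FreeGroup.lift_apply_of, FreeGroup.lift_apply_of] at h2
  have hu : f u = Equiv.swap 0 1 := by simp [hf]
  have hv : f v = Equiv.swap 1 2 := by simp [hf, Ne.symm hne]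
  rw [hu, hv] at h2
  exact absurd h2 (by decide)

lemma freeGroup_zpow_of_subsingleton {β : Type*} (hss : ∀ u v : β, u = v) (x0 : β)
    (g : FreeGroup β) : ∃ k : ℤ, g = FreeGroup.of x0 ^ k := by
  induction g using FreeGroup.induction_on with
  | C1 => exact ⟨0, by simp⟩
  | of x => exact ⟨1, by rw [hss x x0, zpow_one]⟩
  | inv_of x hx => obtain ⟨k, hk⟩ := hx; exact ⟨-k, by rw [hk]; simp⟩
  | mul x y hx hy =>
      obtain ⟨k, hk⟩ := hx; obtain ⟨l, hl⟩ := hy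
      exact ⟨k + l, by rw [hk, hl, zpow_add]⟩

/-- Commuting elements of a free group satisfy a nontrivial power relation. -/
lemma freeGroup_comm_rel {m : ℕ} (x y : FreeGroup (Fin m)) (hcomm : x * y = y * x) :
    ∃ k l : ℤ, x ^ l = y ^ k ∧ (k = 0 → x = 1) ∧ (l = 0 → y = 1) := by
  classical
  set H : Subgroup (FreeGroup (Fin m)) := Subgroup.closure {x, y} with hH
  have hx : x ∈ H := Subgroup.subset_closure (by simp)
  have hy : y ∈ H := Subgroup.subset_closure (by simp)
  -- all elements of H commute
  have hcent : ∀ p ∈ H, ∀ q ∈ H, p * q = q * p := by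
    intro p hp q hq
    have hp' : p ∈ Subgroup.centralizer {x, y} := by
      refine hH ▸ Subgroup.closure_le _ |>.mpr ?_ <| hp
      intro z hz
      rw [SetLike.mem_coe, Subgroup.mem_centralizer_iff]
      rintro w hw
      rcases hz with rfl | rfl <;> rcases hw with rfl | rfl <;>
        simp_all [hcomm]
    have hpx : x * p = p * x := Subgroup.mem_centralizer_iff.mp hp' x (by simp)
    have hpy : y * p = p * y := Subgroup.mem_centralizer_iff.mp hp' y (by simp)
    have hq' : q ∈ Subgroup.centralizer {p} := by
      refine hH ▸ Subgroup.closure_le _ |>.mpr ?_ <| hq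
      intro z hz
      rw [SetLike.mem_coe, Subgroup.mem_centralizer_iff]
      rintro w rfl
      rcases hz with rfl | rfl
      · exact hpx.symm
      · exact hpy.symm
    exact Subgroup.mem_centralizer_iff.mp hq' p rfl
  -- H is free by Nielsen-Schreier
  let β := IsFreeGroup.Generators H
  let e2 : H ≃* FreeGroup β := IsFreeGroup.toFreeGroup H
  have hss : ∀ u v : β, u = v := by
    intro u v
    apply freeGroup_of_comm_eq u v
    have hcH : e2.symm (FreeGroup.of u) * e2.symm (FreeGroup.of v)
        = e2.symm (FreeGroup.of v) * e2.symm (FreeGroup.of u) := by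
      ext
      exact hcent _ (e2.symm (FreeGroup.of u)).2 _ (e2.symm (FreeGroup.of v)).2
    have := congrArg e2 hcH
    simpa using this
  set X : FreeGroup β := e2 ⟨x, hx⟩ with hX
  set Y : FreeGroup β := e2 ⟨y, hy⟩ with hY
  rcases isEmpty_or_nonempty β with hE | hNE
  · -- free group on empty type is trivial
    have htriv : ∀ g : FreeGroup β, g = 1 := by
      intro g
      induction g using FreeGroup.induction_on with
      | C1 => rfl
      | of z => exact hE.elim z
      | inv_of z hz => exact hE.elim z
      | mul a b ha hb => rw [ha, hb, one_mul]
    refine ⟨0, 0, by simp, fun _ => ?_, fun _ => ?_⟩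
    · have : (⟨x, hx⟩ : H) = 1 := e2.injective (by rw [map_one]; exact htriv _)
      exact congrArg Subtype.val this
    · have : (⟨y, hy⟩ : H) = 1 := e2.injective (by rw [map_one]; exact htriv _)
      exact congrArg Subtype.val this
  · obtain ⟨x0⟩ := hNE
    obtain ⟨k, hk⟩ := freeGroup_zpow_of_subsingleton hss x0 X
    obtain ⟨l, hl⟩ := freeGroup_zpow_of_subsingleton hss x0 Y
    refine ⟨k, l, ?_, ?_, ?_⟩
    · have hXY : X ^ l = Y ^ k := by rw [hk, hl, ← zpow_mul, ← zpow_mul, mul_comm]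
      have : (⟨x, hx⟩ : H) ^ l = (⟨y, hy⟩ : H) ^ k := by
        apply e2.injective
        rw [map_zpow, map_zpow]
        exact hXY
      have := congrArg Subtype.val this
      simpa using this
    · rintro rfl
      have : (⟨x, hx⟩ : H) = 1 := e2.injective (by rw [map_one]; show X = 1; rw [hk, zpow_zero])
      exact congrArg Subtype.val this
    · rintro rfl
      have : (⟨y, hy⟩ : H) = 1 := e2.injective (by rw [map_one]; show Y = 1; rw [hl, zpow_zero])
      exact congrArg Subtype.val this

end WiseAux

/-- Example 5.5: for `n ≥ 3`, Wise's group `Gₙ = ⟨a,b,s,t | [a,b], saⁿs⁻¹ = ab,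
tbⁿt⁻¹ = ab⟩` is not (finite rank free)-by-ℤ: there is no normal subgroup `N` isomorphic
to a free group of finite rank with `Gₙ/N ≅ ℤ` (the latter expressed by a surjective
homomorphism onto ℤ whose kernel is exactly `N`). -/
theorem Wise_nonsimple_not_free_by_Z (n : ℕ) (hn : 3 ≤ n) :
    ¬ ∃ N : Subgroup (PresentedGroup (rels17 n)), N.Normal ∧
      (∃ m : ℕ, Nonempty (N ≃* FreeGroup (Fin m))) ∧
      ∃ χ : PresentedGroup (rels17 n) →* Multiplicative ℤ,
        Function.Surjective χ ∧ χ.ker = N := by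
  classical
  rintro ⟨N, -, ⟨m, ⟨e⟩⟩, χ, -, hker⟩
  have hn0 : (n : ℝ) ≠ 0 := by positivity
  have hs2 : Real.sqrt 2 ≠ 0 := by positivity
  set π : FreeGroup (Fin 4) →* PresentedGroup (rels17 n) := PresentedGroup.mk (rels17 n) with hπ
  have hrel : ∀ r ∈ rels17 n, π r = 1 := by
    intro r hr
    exact (QuotientGroup.eq_one_iff r).mpr (Subgroup.subset_normalClosure hr)
  have mem1 : a17 * b17 * (b17 * a17)⁻¹ ∈ rels17 n := by left; rfl
  have mem2 : s17 * a17 ^ n * s17⁻¹ * (a17 * b17)⁻¹ ∈ rels17 n := by right; left; rfl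
  have mem3 : t17 * b17 ^ n * t17⁻¹ * (a17 * b17)⁻¹ ∈ rels17 n := by right; right; rfl
  have h1 : π a17 * π b17 = π b17 * π a17 := by
    have := hrel _ mem1
    rwa [map_mul, map_mul, map_inv, map_mul, mul_inv_eq_one] at this
  have h2 : π s17 * (π a17) ^ n * (π s17)⁻¹ = π a17 * π b17 := by
    have := hrel _ mem2
    rwa [map_mul, map_mul, map_mul, map_inv, map_inv, map_mul, map_pow, mul_inv_eq_one] at this
  have h3 : π t17 * (π b17) ^ n * (π t17)⁻¹ = π a17 * π b17 := by
    have := hrel _ mem3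
    rwa [map_mul, map_mul, map_mul, map_inv, map_inv, map_mul, map_pow, mul_inv_eq_one] at this
  -- Step 1: χ kills a and b
  set α : ℤ := (χ (π a17)).toAdd with hα
  set β : ℤ := (χ (π b17)).toAdd with hβ
  have e2' : (n : ℤ) * α = α + β := by
    have := congrArg χ h2
    rw [map_mul, map_mul, map_mul, map_inv, map_pow, mul_comm, ← mul_assoc,
      inv_mul_cancel, one_mul] at this
    have := congrArg Multiplicative.toAdd this
    simpa [hα, hβ, mul_comm] using this
  have e3' : (n : ℤ) * β = α + β := by
    have := congrArg χ h3
    rw [map_mul, map_mul, map_mul, map_inv, map_pow, mul_comm, ← mul_assoc,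
      inv_mul_cancel, one_mul] at this
    have := congrArg Multiplicative.toAdd this
    simpa [hα, hβ, mul_comm] using this
  have hnz : (n : ℤ) ≠ 0 := by omega
  have hαβ : α = β := mul_left_cancel₀ hnz (by rw [e2', e3'])
  have hα0 : α = 0 := by
    have h4 : ((n : ℤ) - 2) * α = 0 := by rw [sub_mul]; omega
    have : (n : ℤ) - 2 ≠ 0 := by omega
    exact (mul_eq_zero.mp h4).resolve_left this
  have hβ0 : β = 0 := hαβ ▸ hα0
  have hA : π a17 ∈ N := by
    rw [← hker, MonoidHom.mem_ker]
    have : (χ (π a17)).toAdd = (1 : Multiplicative ℤ).toAdd := hα0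
    exact Multiplicative.toAdd.injective this
  have hB : π b17 ∈ N := by
    rw [← hker, MonoidHom.mem_ker]
    have : (χ (π b17)).toAdd = (1 : Multiplicative ℤ).toAdd := hβ0
    exact Multiplicative.toAdd.injective this
  -- Step 2: the representation ψ
  set lam : ℝ := (1 + Real.sqrt 2) / n with hlam
  set mu : ℝ := (1 + Real.sqrt 2) / (n * Real.sqrt 2) with hmu
  have hlam0 : lam ≠ 0 := by
    rw [hlam]; positivity
  have hmu0 : mu ≠ 0 := by
    rw [hmu]; positivity
  set f : Fin 4 → Equiv.Perm ℝ :=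
    ![addLeftHom (Multiplicative.ofAdd 1), addLeftHom (Multiplicative.ofAdd (Real.sqrt 2)),
      Equiv.mulLeft₀ lam hlam0, Equiv.mulLeft₀ mu hmu0] with hf
  have liftpow : ∀ (x : ℝ) (k : ℕ),
      (addLeftHom (Multiplicative.ofAdd x)) ^ k = addLeftHom (Multiplicative.ofAdd (k * x)) := by
    intro x k
    rw [← map_pow]
    congr 1
    rw [← ofAdd_nsmul]
    congr 1
    simp
  have hψrels : ∀ r ∈ rels17 n, FreeGroup.lift f r = 1 := by
    intro r hr
    have hfa : FreeGroup.lift f a17 = addLeftHom (Multiplicative.ofAdd 1) := by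
      rw [a17, FreeGroup.lift_apply_of]; simp [hf]
    have hfb : FreeGroup.lift f b17 = addLeftHom (Multiplicative.ofAdd (Real.sqrt 2)) := by
      rw [b17, FreeGroup.lift_apply_of]; simp [hf]
    have hfs : FreeGroup.lift f s17 = Equiv.mulLeft₀ lam hlam0 := by
      rw [s17, FreeGroup.lift_apply_of]; simp [hf]
    have hft : FreeGroup.lift f t17 = Equiv.mulLeft₀ mu hmu0 := by
      rw [t17, FreeGroup.lift_apply_of]; simp [hf]
    simp only [rels17, Set.mem_insert_iff, Set.mem_singleton_iff] at hr
    rcases hr with rfl | rfl | rfl <;>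
      simp only [map_mul, map_inv, map_pow, hfa, hfb, hfs, hft] <;>
      rw [mul_inv_eq_one]
    · ext z
      simp only [Equiv.Perm.mul_apply, addLeftHom_apply]
      ring
    · rw [liftpow, mul_inv_eq_iff_eq_mul]
      ext z
      simp only [Equiv.Perm.mul_apply, addLeftHom_apply, Equiv.mulLeft₀_apply]
      show lam * ((n : ℝ) * 1 + z) = 1 + (Real.sqrt 2 + lam * z)
      rw [hlam]
      field_simp
      ring
    · rw [liftpow, mul_inv_eq_iff_eq_mul]
      ext z
      simp only [Equiv.Perm.mul_apply, addLeftHom_apply, Equiv.mulLeft₀_apply]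
      show mu * ((n : ℝ) * Real.sqrt 2 + z) = 1 + (Real.sqrt 2 + mu * z)
      rw [hmu]
      have h22 : Real.sqrt 2 * Real.sqrt 2 = 2 := Real.mul_self_sqrt (by norm_num)
      field_simp
      ring
  set ψ : PresentedGroup (rels17 n) →* Equiv.Perm ℝ := PresentedGroup.toGroup hψrels with hψ
  have hψa : ψ (π a17) = addLeftHom (Multiplicative.ofAdd 1) := by
    show PresentedGroup.toGroup hψrels (PresentedGroup.of 0) = _
    rw [PresentedGroup.toGroup.of]
    simp [hf]
  have hψb : ψ (π b17) = addLeftHom (Multiplicative.ofAdd (Real.sqrt 2)) := by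
    show PresentedGroup.toGroup hψrels (PresentedGroup.of 1) = _
    rw [PresentedGroup.toGroup.of]
    simp [hf]
  -- Step 3: commuting elements in the free kernel
  set X : FreeGroup (Fin m) := e ⟨π a17, hA⟩ with hXdef
  set Y : FreeGroup (Fin m) := e ⟨π b17, hB⟩ with hYdef
  have hXY : X * Y = Y * X := by
    rw [hXdef, hYdef, ← map_mul, ← map_mul]
    congr 1
    ext
    exact h1
  obtain ⟨k, l, hpow, hk0, hl0⟩ := freeGroup_comm_rel X Y hXY
  -- transfer the power relation to G and then to Perm ℝ
  have hGpow : (π a17) ^ l = (π b17) ^ k := by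
    have : (⟨π a17, hA⟩ : N) ^ l = (⟨π b17, hB⟩ : N) ^ k := by
      apply e.injective
      rw [map_zpow, map_zpow]
      exact hpow
    have := congrArg Subtype.val this
    simpa using this
  have hreal : (l : ℝ) * 1 = (k : ℝ) * Real.sqrt 2 := by
    have := congrArg ψ hGpow
    rw [map_zpow, map_zpow, hψa, hψb, addLeftHom_zpow, addLeftHom_zpow] at this
    exact addLeftHom_inj this
  have hk : k = 0 := by
    by_contra hk
    have hirr : Irrational ((k : ℝ) * Real.sqrt 2) :=
      (irrational_sqrt_two.intCast_mul hk)
    rw [← hreal] at hirr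
    exact hirr ⟨(l : ℚ) * 1, by push_cast; ring⟩
  have hX1 : X = 1 := hk0 hk
  have hπa1 : π a17 = 1 := by
    have : (⟨π a17, hA⟩ : N) = 1 := e.injective (by rw [map_one]; exact hX1)
    exact congrArg Subtype.val this
  have := congrArg ψ hπa1
  rw [hψa, map_one ψ] at this
  have h10 : (1 : ℝ) + 0 = 0 := congrArg (fun p : Equiv.Perm ℝ => p 0) this
  linarith
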